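/- Let \varphi(z) = a z^M with 0 < |a| < 1 and M a positive integer, and let D_\varphi f = f' \circ \varphi act on S^2 (the weighted Hardy space with weights \beta(0)=1, \beta(n)=n). Then \|D_\varphi\| = \max\{1, M(\nu-1)|a|^{\nu-1}\}, where \nu = \lfloor (2-|a|)/(1-|a|) \rfloor. -/

import Mathlib

open Metric

/-- `f` has Taylor coefficients `c` on the unit disk. -/
def HasCoeffs (f : ℂ → ℂ) (c : ℕ → ℂ) : Prop :=
  ∀ z : ℂ, ‖z‖ < 1 → HasSum (fun n : ℕ => c n * z ^ n) (f z)

/-- The square of the `S²` norm, in terms of Taylor coefficients. -/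
noncomputable def S2sq (c : ℕ → ℂ) : ℝ :=
  ‖c 0‖ ^ 2 + ∑' n : ℕ, (n : ℝ) ^ 2 * ‖c n‖ ^ 2

lemma hasCoeffs_ball {f : ℂ → ℂ} {c : ℕ → ℂ} (h : HasCoeffs f c) :
    HasFPowerSeriesOnBall f (FormalMultilinearSeries.ofScalars ℂ c) 0 1 := by
  constructor
  · apply ENNReal.le_of_forall_nnreal_lt
    intro r hr
    apply FormalMultilinearSeries.le_radius_of_summable_norm
    have hr1 : (r : ℝ) < 1 := by exact_mod_cast hr
    have h1 : ‖((r : ℝ) : ℂ)‖ < 1 := by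
      rw [Complex.norm_real, Real.norm_eq_abs, abs_of_nonneg r.coe_nonneg]; exact hr1
    have h3 := summable_norm_iff.2 (h _ h1).summable
    refine h3.congr fun n => ?_
    rw [FormalMultilinearSeries.ofScalars_norm, norm_mul, norm_pow, Complex.norm_real,
      Real.norm_eq_abs, abs_of_nonneg r.coe_nonneg]
  · exact one_pos
  · intro y hy
    rw [EMetric.mem_ball, edist_zero_right] at hy
    have hy' : ‖y‖ < 1 := by
      have := ENNReal.coe_lt_one_iff.1 hy
      exact_mod_cast this
    have h2 := h y hy'
    rw [zero_add]
    refine HasSum.congr_fun h2 fun n => ?_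
    rw [FormalMultilinearSeries.ofScalars_apply_eq, smul_eq_mul]

lemma coeffs_unique {f : ℂ → ℂ} {c d : ℕ → ℂ} (hc : HasCoeffs f c) (hd : HasCoeffs f d) :
    c = d :=
  FormalMultilinearSeries.ofScalars_series_injective ℂ ℂ
    ((hasCoeffs_ball hc).hasFPowerSeriesAt.eq_formalMultilinearSeries
      (hasCoeffs_ball hd).hasFPowerSeriesAt)

lemma hasCoeffs_deriv {f : ℂ → ℂ} {c : ℕ → ℂ} (h : HasCoeffs f c) :
    HasCoeffs (deriv f) (fun n => ((n : ℂ) + 1) * c (n + 1)) := by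
  have hb := (hasCoeffs_ball h).fderiv
  intro z hz
  rcases eq_or_ne z 0 with rfl | hz0
  · have h0 : deriv f 0 = c 1 := by
      have := (hasCoeffs_ball h).hasFPowerSeriesAt.deriv
      rw [this, FormalMultilinearSeries.ofScalars_apply_eq]
      simp
    have h1 := hasSum_single (f := fun n : ℕ => ((n : ℂ) + 1) * c (n + 1) * (0 : ℂ) ^ n) 0
      (fun b hb' => by simp [zero_pow hb'])
    simpa [h0] using h1
  · have hz' : z ∈ Metric.eball (0 : ℂ) 1 := by
      rw [EMetric.mem_ball, edist_zero_right, enorm_eq_nnnorm]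
      exact_mod_cast hz
    have h1 := hb.hasSum hz'
    have h2 := h1.mapL (ContinuousLinearMap.apply ℂ ℂ (1 : ℂ))
    rw [zero_add] at h2
    have h3 : fderiv ℂ f z 1 = deriv f z := fderiv_apply_one_eq_deriv
    have h2' : HasSum (fun n : ℕ =>
        ((FormalMultilinearSeries.ofScalars ℂ c).derivSeries n fun _ => z) 1) (deriv f z) := by
      rw [← h3]; exact h2
    refine HasSum.congr_fun h2' fun n => ?_
    have key : (FormalMultilinearSeries.ofScalars ℂ c).derivSeries n (fun _ => z) 1
        = ((n : ℂ) + 1) * c (n + 1) * z ^ n := by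
      have e1 : (1 : ℂ) = z⁻¹ • z := by rw [smul_eq_mul, inv_mul_cancel₀ hz0]
      rw [e1, ContinuousLinearMap.map_smul,
        FormalMultilinearSeries.derivSeries_apply_diag,
        FormalMultilinearSeries.ofScalars_apply_eq]
      simp only [smul_eq_mul]
      field_simp
      ring
    rw [key]

lemma hasCoeffs_comp {f : ℂ → ℂ} {c : ℕ → ℂ} {a : ℂ} (ha : ‖a‖ < 1) {M : ℕ} (hM : 1 ≤ M)
    (h : HasCoeffs f c) :
    HasCoeffs (fun z => deriv f (a * z ^ M))
      (fun k => if M ∣ k then (((k / M : ℕ) : ℂ) + 1) * c (k / M + 1) * a ^ (k / M) else 0) := by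
  intro z hz
  have hw : ‖a * z ^ M‖ < 1 := by
    rw [norm_mul, norm_pow]
    calc ‖a‖ * ‖z‖ ^ M ≤ ‖a‖ * 1 := by
          gcongr
          exact pow_le_one₀ (norm_nonneg z) hz.le
      _ < 1 := by rwa [mul_one]
  have hd := hasCoeffs_deriv h (a * z ^ M) hw
  have hMpos : 0 < M := hM
  have hinj : Function.Injective (fun n : ℕ => M * n) :=
    fun x y hxy => Nat.eq_of_mul_eq_mul_left hMpos hxy
  refine (Function.Injective.hasSum_iff hinj ?_).1 ?_
  · intro k hk
    have : ¬ M ∣ k := by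
      intro ⟨n, hn⟩
      exact hk ⟨n, hn.symm⟩
    simp [this]
  · refine HasSum.congr_fun hd fun n => ?_
    have h1 : M ∣ M * n := dvd_mul_right M n
    have h2 : M * n / M = n := Nat.mul_div_cancel_left n hMpos
    simp only [Function.comp_apply, h1, if_true, h2]
    rw [mul_pow, pow_mul]
    ring

lemma peak_le {r : ℝ} (hr0 : 0 ≤ r) (hr : r < 1) {m : ℕ} (hm : m = ⌊1 / (1 - r)⌋₊) :
    ∀ n : ℕ, (n : ℝ) * r ^ n ≤ (m : ℝ) * r ^ m := by
  have h1r : (0 : ℝ) < 1 - r := by linarith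
  have hx0 : (0 : ℝ) ≤ 1 / (1 - r) := by positivity
  have hmx : (m : ℝ) ≤ 1 / (1 - r) := hm ▸ Nat.floor_le hx0
  have hxm : 1 / (1 - r) < (m : ℝ) + 1 := hm ▸ Nat.lt_floor_add_one _
  have inc : ∀ j : ℕ, j + 1 ≤ m → (j : ℝ) * r ^ j ≤ ((j : ℝ) + 1) * r ^ (j + 1) := by
    intro j hj
    have hj' : (j : ℝ) + 1 ≤ 1 / (1 - r) := by
      calc (j : ℝ) + 1 ≤ (m : ℝ) := by exact_mod_cast hj
        _ ≤ _ := hmx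
    have key : (j : ℝ) ≤ ((j : ℝ) + 1) * r := by
      have := (le_div_iff₀ h1r).1 hj'
      nlinarith
    calc (j : ℝ) * r ^ j ≤ (((j : ℝ) + 1) * r) * r ^ j :=
          mul_le_mul_of_nonneg_right key (pow_nonneg hr0 j)
      _ = ((j : ℝ) + 1) * r ^ (j + 1) := by rw [pow_succ]; ring
  have dec : ∀ j : ℕ, m ≤ j → ((j : ℝ) + 1) * r ^ (j + 1) ≤ (j : ℝ) * r ^ j := by
    intro j hj
    have hmj : (m : ℝ) ≤ j := by exact_mod_cast hj
    have hj' : 1 / (1 - r) < (j : ℝ) + 1 := by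
      calc 1 / (1 - r) < (m : ℝ) + 1 := hxm
        _ ≤ (j : ℝ) + 1 := by linarith
    have key : ((j : ℝ) + 1) * r ≤ (j : ℝ) := by
      have := (div_lt_iff₀ h1r).1 hj'
      nlinarith
    calc ((j : ℝ) + 1) * r ^ (j + 1) = (((j : ℝ) + 1) * r) * r ^ j := by rw [pow_succ]; ring
      _ ≤ (j : ℝ) * r ^ j := mul_le_mul_of_nonneg_right key (pow_nonneg hr0 j)
  have A : ∀ d : ℕ, ((m - d : ℕ) : ℝ) * r ^ (m - d) ≤ (m : ℝ) * r ^ m := by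
    intro d
    induction d with
    | zero => simp
    | succ d ih =>
      rcases le_or_gt m (d + 1) with hcase | hcase
      · rw [Nat.sub_eq_zero_of_le hcase]
        simpa using by positivity
      · have e1 : m - (d + 1) + 1 = m - d := by omega
        have step := inc (m - (d + 1)) (by omega)
        rw [e1] at step
        have ecast : ((m - (d + 1) : ℕ) : ℝ) + 1 = ((m - d : ℕ) : ℝ) := by
          rw [← Nat.cast_add_one, e1]
        rw [ecast] at step
        exact step.trans ih
  have B : ∀ d : ℕ, ((m + d : ℕ) : ℝ) * r ^ (m + d) ≤ (m : ℝ) * r ^ m := by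
    intro d
    induction d with
    | zero => simp
    | succ d ih =>
      have step := dec (m + d) (Nat.le_add_right m d)
      have e1 : m + (d + 1) = (m + d) + 1 := by omega
      rw [e1]
      push_cast
      push_cast at ih step
      linarith
  intro n
  rcases le_total n m with hnm | hmn
  · have := A (m - n)
    rwa [Nat.sub_sub_self hnm] at this
  · have := B (n - m)
    rwa [Nat.add_sub_cancel' hmn] at this

/-- For `φ(z) = a z^M` with `0 < |a| < 1` and `M ≥ 1`, the norm of `D_φ f = f' ∘ φ` on
`S²` is `max {1, M(ν-1)|a|^{ν-1}}` with `ν = ⌊(2-|a|)/(1-|a|)⌋`: this constant bounds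
the operator and is attained. -/
theorem stmt9 (a : ℂ) (ha0 : a ≠ 0) (ha : ‖a‖ < 1) (M : ℕ) (hM : 1 ≤ M)
    (ν : ℕ) (hν : ν = ⌊(2 - ‖a‖) / (1 - ‖a‖)⌋₊)
    (N : ℝ) (hN : N = max 1 ((M : ℝ) * ((ν : ℝ) - 1) * ‖a‖ ^ (ν - 1))) :
    (∀ (f : ℂ → ℂ) (c d : ℕ → ℂ), HasCoeffs f c →
        Summable (fun n : ℕ => (n : ℝ) ^ 2 * ‖c n‖ ^ 2) →
        HasCoeffs (fun z => deriv f (a * z ^ M)) d →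
        S2sq d ≤ N ^ 2 * S2sq c) ∧
    (∃ (f : ℂ → ℂ) (c d : ℕ → ℂ), HasCoeffs f c ∧
        Summable (fun n : ℕ => (n : ℝ) ^ 2 * ‖c n‖ ^ 2) ∧
        HasCoeffs (fun z => deriv f (a * z ^ M)) d ∧
        S2sq c = 1 ∧ S2sq d = N ^ 2) := by
  have hr0 : (0 : ℝ) ≤ ‖a‖ := norm_nonneg a
  have h1r : (0 : ℝ) < 1 - ‖a‖ := by linarith
  have hν2 : ν = ⌊1 / (1 - ‖a‖)⌋₊ + 1 := by
    rw [hν]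
    have he : (2 - ‖a‖) / (1 - ‖a‖) = 1 / (1 - ‖a‖) + 1 := by
      rw [div_add' _ _ _ h1r.ne', div_eq_div_iff h1r.ne' h1r.ne']
      ring
    rw [he, Nat.floor_add_one (by positivity)]
  set m := ν - 1 with hmdef
  have hmfloor : m = ⌊1 / (1 - ‖a‖)⌋₊ := by omega
  have hm1 : 1 ≤ m := by
    rw [hmfloor]
    have h1x : (1 : ℝ) ≤ 1 / (1 - ‖a‖) := by rw [le_div_iff₀ h1r]; linarith
    exact Nat.le_floor (by exact_mod_cast h1x)
  have hνm : (ν : ℝ) - 1 = (m : ℝ) := by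
    have : ν = m + 1 := by omega
    rw [this]; push_cast; ring
  have hNval : N = max 1 ((M : ℝ) * (m : ℝ) * ‖a‖ ^ m) := by rw [hN, hνm]
  have hN1 : (1 : ℝ) ≤ N := hNval ▸ le_max_left _ _
  have hN0 : (0 : ℝ) ≤ N := by linarith
  have hkey : ∀ n : ℕ, (M : ℝ) * n * ‖a‖ ^ n ≤ N := by
    intro n
    calc (M : ℝ) * n * ‖a‖ ^ n = (M : ℝ) * ((n : ℝ) * ‖a‖ ^ n) := by ring
      _ ≤ (M : ℝ) * ((m : ℝ) * ‖a‖ ^ m) :=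
          mul_le_mul_of_nonneg_left (peak_le hr0 ha hmfloor n) (by positivity)
      _ = (M : ℝ) * (m : ℝ) * ‖a‖ ^ m := by ring
      _ ≤ N := hNval ▸ le_max_right _ _
  have hMpos : 0 < M := hM
  constructor
  · -- the bound
    intro f c d hc hs hd
    have hde : d = fun k =>
        if M ∣ k then (((k / M : ℕ) : ℂ) + 1) * c (k / M + 1) * a ^ (k / M) else 0 :=
      coeffs_unique hd (hasCoeffs_comp ha hM hc)
    subst hde
    set v : ℕ → ℝ := fun n => ((n : ℝ) + 1) ^ 2 * ‖c (n + 1)‖ ^ 2 with hv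
    have sv : Summable v := by
      have := (summable_nat_add_iff 1).2 hs
      refine this.congr fun n => ?_
      push_cast
      ring
    set hfun : ℕ → ℝ := fun n => if n = 0 then 0 else v n with hhfun
    have sh : Summable hfun := by
      refine Summable.of_nonneg_of_le (fun n => ?_) (fun n => ?_) sv
      · by_cases hn : n = 0 <;> simp [hhfun, hn] <;> positivity
      · by_cases hn : n = 0 <;> simp [hhfun, hn] <;> positivity
    set G : ℕ → ℝ := fun n =>
      ((M * n : ℕ) : ℝ) ^ 2 * ‖((n : ℂ) + 1) * c (n + 1) * a ^ n‖ ^ 2 with hG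
    have hGnorm : ∀ n : ℕ, G n = ((M : ℝ) * n * ‖a‖ ^ n) ^ 2 * v n := by
      intro n
      have hn1 : ‖((n : ℂ) + 1)‖ = (n : ℝ) + 1 := by
        rw [show ((n : ℂ) + 1) = ((n + 1 : ℕ) : ℂ) by push_cast; ring, Complex.norm_natCast]
        push_cast; ring
      rw [hG]
      simp only [norm_mul, norm_pow, hn1]
      push_cast
      ring
    have hGle : ∀ n : ℕ, G n ≤ N ^ 2 * hfun n := by
      intro n
      by_cases hn : n = 0
      · subst hn
        rw [hGnorm]
        simp [hhfun]
      · have h1 : hfun n = v n := by simp [hhfun, hn]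
        rw [hGnorm, h1]
        have h2 : ((M : ℝ) * n * ‖a‖ ^ n) ^ 2 ≤ N ^ 2 :=
          pow_le_pow_left₀ (by positivity) (hkey n) 2
        exact mul_le_mul_of_nonneg_right h2 (by positivity)
    have sG : Summable G := by
      refine Summable.of_nonneg_of_le (fun n => ?_) hGle (sh.mul_left _)
      rw [hG]; positivity
    have hinj : Function.Injective (fun n : ℕ => M * n) :=
      fun x y hxy => Nat.eq_of_mul_eq_mul_left hMpos hxy
    have hreindex : (∑' k : ℕ, (k : ℝ) ^ 2 *
        ‖(if M ∣ k then (((k / M : ℕ) : ℂ) + 1) * c (k / M + 1) * a ^ (k / M) else 0)‖ ^ 2)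
        = ∑' n : ℕ, G n := by
      rw [← Function.Injective.tsum_eq hinj]
      · refine tsum_congr fun n => ?_
        have h1 : M ∣ M * n := dvd_mul_right M n
        have h2 : M * n / M = n := Nat.mul_div_cancel_left n hMpos
        simp only [h1, if_true, h2, hG]
      · intro k hk
        rw [Function.mem_support] at hk
        by_contra hrange
        have : ¬ M ∣ k := by
          intro ⟨n, hn⟩
          exact hrange ⟨n, hn.symm⟩
        simp [this] at hk
    have he0 : ‖(if M ∣ (0:ℕ) then (((0 / M : ℕ) : ℂ) + 1) * c (0 / M + 1) * a ^ (0 / M)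
        else 0)‖ ^ 2 = v 0 := by
      simp [Nat.zero_div, hv]
    have hsplit : (∑' n : ℕ, v n) = v 0 + ∑' n : ℕ, hfun n := by
      rw [sv.tsum_eq_add_tsum_ite 0]
    have htail : (∑' n : ℕ, (n : ℝ) ^ 2 * ‖c n‖ ^ 2) = ∑' n : ℕ, v n := by
      rw [hs.tsum_eq_zero_add]
      simp only [Nat.cast_zero]
      rw [zero_pow (by norm_num), zero_mul, zero_add]
      refine tsum_congr fun n => ?_
      push_cast
      ring
    have hvs : (∑' n : ℕ, v n) ≤ S2sq c := by
      rw [S2sq, htail]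
      have : (0:ℝ) ≤ ‖c 0‖ ^ 2 := by positivity
      linarith
    calc S2sq (fun k =>
        if M ∣ k then (((k / M : ℕ) : ℂ) + 1) * c (k / M + 1) * a ^ (k / M) else 0)
        = v 0 + ∑' n : ℕ, G n := by rw [S2sq, he0, hreindex]
      _ ≤ N ^ 2 * v 0 + N ^ 2 * ∑' n : ℕ, hfun n := by
          have t1 : v 0 ≤ N ^ 2 * v 0 :=
            le_mul_of_one_le_left (by positivity) (one_le_pow₀ hN1)
          have t2 : (∑' n : ℕ, G n) ≤ ∑' n : ℕ, N ^ 2 * hfun n :=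
            Summable.tsum_le_tsum hGle sG (sh.mul_left _)
          rw [tsum_mul_left] at t2
          linarith
      _ = N ^ 2 * (v 0 + ∑' n : ℕ, hfun n) := by ring
      _ = N ^ 2 * ∑' n : ℕ, v n := by rw [hsplit]
      _ ≤ N ^ 2 * S2sq c := mul_le_mul_of_nonneg_left hvs (by positivity)
  · -- attainment
    rcases le_or_gt ((M : ℝ) * (m : ℝ) * ‖a‖ ^ m) 1 with hcase | hcase
    · -- N = 1, take f = id
      have hNeq : N = 1 := by rw [hNval, max_eq_left hcase]
      refine ⟨fun z => z, fun n => if n = 1 then 1 else 0,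
        fun k => if k = 0 then 1 else 0, ?_, ?_, ?_, ?_, ?_⟩
      · intro z hz
        have h1 := hasSum_single (f := fun n : ℕ =>
          (if n = 1 then (1:ℂ) else 0) * z ^ n) 1 (fun b hb => by simp [hb])
        simpa using h1
      · apply summable_of_ne_finset_zero (s := {1})
        intro b hb
        simp only [Finset.mem_singleton] at hb
        simp [hb]
      · intro z hz
        have hid : deriv (fun z : ℂ => z) (a * z ^ M) = 1 := by
          simp
        have h1 := hasSum_single (f := fun k : ℕ =>
          (if k = 0 then (1:ℂ) else 0) * z ^ k) 0 (fun b hb => by simp [hb])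
        simpa [hid] using h1
      · rw [S2sq]
        rw [tsum_eq_single 1 (fun b hb => by simp [hb])]
        norm_num
      · rw [S2sq, hNeq]
        rw [tsum_eq_single 0 (fun b hb => by simp [hb])]
        norm_num
    · -- N = M m |a|^m, take f = z^(m+1)/(m+1)
      have hNeq : N = (M : ℝ) * (m : ℝ) * ‖a‖ ^ m := by rw [hNval, max_eq_right hcase.le]
      have hm0 : ((m : ℂ) + 1) ≠ 0 := by
        have : ((m + 1 : ℕ) : ℂ) ≠ 0 := Nat.cast_ne_zero.2 (Nat.succ_ne_zero m)
        push_cast at this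
        exact this
      have hmR : ((m : ℝ) + 1) ≠ 0 := by positivity
      have hderiv : ∀ w : ℂ, deriv (fun z : ℂ => ((m : ℂ) + 1)⁻¹ * z ^ (m + 1)) w = w ^ m := by
        intro w
        have h1 : HasDerivAt (fun z : ℂ => z ^ (m + 1)) (((m : ℂ) + 1) * w ^ m) w := by
          have := hasDerivAt_pow (m + 1) w
          simpa [Nat.add_sub_cancel] using this
        have h2 := h1.const_mul (((m : ℂ) + 1)⁻¹)
        rw [h2.deriv]
        field_simp
      refine ⟨fun z => ((m : ℂ) + 1)⁻¹ * z ^ (m + 1),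
        fun n => if n = m + 1 then ((m : ℂ) + 1)⁻¹ else 0,
        fun k => if k = M * m then a ^ m else 0, ?_, ?_, ?_, ?_, ?_⟩
      · intro z hz
        have h1 := hasSum_single (f := fun n : ℕ =>
          (if n = m + 1 then ((m : ℂ) + 1)⁻¹ else 0) * z ^ n) (m + 1) (fun b hb => by simp [hb])
        simpa using h1
      · apply summable_of_ne_finset_zero (s := {m + 1})
        intro b hb
        simp only [Finset.mem_singleton] at hb
        simp [hb]
      · intro z hz
        simp only [hderiv]
        have h1 := hasSum_single (f := fun k : ℕ =>
          (if k = M * m then a ^ m else 0) * z ^ k) (M * m) (fun b hb => by simp [hb])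
        have h2 : (a * z ^ M) ^ m = a ^ m * z ^ (M * m) := by
          rw [mul_pow, pow_mul]
        simpa [h2] using h1
      · rw [S2sq]
        have hc0 : (if (0:ℕ) = m + 1 then ((m : ℂ) + 1)⁻¹ else 0) = 0 := by
          simp [Nat.succ_ne_zero]
        rw [hc0]
        rw [tsum_eq_single (m + 1) (fun b hb => by simp [hb])]
        have hnorm : ‖((m : ℂ) + 1)⁻¹‖ = ((m : ℝ) + 1)⁻¹ := by
          rw [norm_inv, show ((m : ℂ) + 1) = ((m + 1 : ℕ) : ℂ) by push_cast; ring,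
            Complex.norm_natCast]
          push_cast
          ring
        rw [if_pos rfl, hnorm, norm_zero]
        push_cast
        field_simp
        norm_num
      · rw [S2sq]
        have hMm : M * m ≠ 0 := by positivity
        have hd0 : (if (0:ℕ) = M * m then a ^ m else 0) = 0 := by
          simp [Ne.symm hMm]
        rw [hd0]
        rw [tsum_eq_single (M * m) (fun b hb => by simp [hb])]
        rw [if_pos rfl, norm_zero, norm_pow, hNeq]
        push_cast
        ring
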